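/- Let ε ≥ 0 and λ ≥ 0, and let X, Y, Z, X̃, Ỹ, Ŷ, Ẑ be real matrices, each with n columns, with I the n×n identity. Suppose all of the following Loewner-order sandwiches hold: (1) (1−ε)(YᵀY+λI) ⪯ ỸᵀỸ+λI ⪯ (1+ε)(YᵀY+λI); (2) (1−ε)(XᵀX+YᵀY+λI) ⪯ X̃ᵀX̃+ỸᵀỸ+λI ⪯ (1+ε)(XᵀX+YᵀY+λI); (3) (1−ε)(YᵀY+ZᵀZ+λI) ⪯ ŶᵀŶ+ẐᵀẐ+λI ⪯ (1+ε)(YᵀY+ZᵀZ+λI). Then, setting G = XᵀX+YᵀY+ZᵀZ, one has (1−3ε)(G+λI) ⪯ X̃ᵀX̃+ŶᵀŶ+ẐᵀẐ+λI ⪯ (1+3ε)(G+λI). -/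

import Mathlib

open Matrix

lemma psd_smul_aux {n : ℕ} {M : Matrix (Fin n) (Fin n) ℝ} (h : M.PosSemidef)
    {c : ℝ} (hc : 0 ≤ c) : (c • M).PosSemidef := by
  refine ⟨by rw [IsHermitian, conjTranspose_smul, star_trivial, h.1], fun x => ?_⟩
  exact (h.smul hc).2 x

/-- **Deterministic sandwich in the DownSample lemma.**
From the three Loewner sandwiches (1), (2), (3), one gets
`(1-3ε)(G+λI) ⪯ X̃ᵀX̃ + ŶᵀŶ + ẐᵀẐ + λI ⪯ (1+3ε)(G+λI)` with `G = XᵀX+YᵀY+ZᵀZ`. -/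
theorem downsample_sandwich (n a b c a' b' b'' c'' : ℕ) (ε lam : ℝ)
    (hε : 0 ≤ ε) (hlam : 0 ≤ lam)
    (X : Matrix (Fin a) (Fin n) ℝ) (Y : Matrix (Fin b) (Fin n) ℝ)
    (Z : Matrix (Fin c) (Fin n) ℝ)
    (Xt : Matrix (Fin a') (Fin n) ℝ) (Yt : Matrix (Fin b') (Fin n) ℝ)
    (Yh : Matrix (Fin b'') (Fin n) ℝ) (Zh : Matrix (Fin c'') (Fin n) ℝ)
    (h1l : ((Ytᵀ * Yt + lam • 1) - (1 - ε) • (Yᵀ * Y + lam • 1)).PosSemidef)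
    (h1r : ((1 + ε) • (Yᵀ * Y + lam • 1) - (Ytᵀ * Yt + lam • 1)).PosSemidef)
    (h2l : ((Xtᵀ * Xt + Ytᵀ * Yt + lam • 1)
        - (1 - ε) • (Xᵀ * X + Yᵀ * Y + lam • 1)).PosSemidef)
    (h2r : ((1 + ε) • (Xᵀ * X + Yᵀ * Y + lam • 1)
        - (Xtᵀ * Xt + Ytᵀ * Yt + lam • 1)).PosSemidef)
    (h3l : ((Yhᵀ * Yh + Zhᵀ * Zh + lam • 1)
        - (1 - ε) • (Yᵀ * Y + Zᵀ * Z + lam • 1)).PosSemidef)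
    (h3r : ((1 + ε) • (Yᵀ * Y + Zᵀ * Z + lam • 1)
        - (Yhᵀ * Yh + Zhᵀ * Zh + lam • 1)).PosSemidef) :
    ((Xtᵀ * Xt + Yhᵀ * Yh + Zhᵀ * Zh + lam • 1)
      - (1 - 3 * ε) • (Xᵀ * X + Yᵀ * Y + Zᵀ * Z + lam • 1)).PosSemidef ∧
    ((1 + 3 * ε) • (Xᵀ * X + Yᵀ * Y + Zᵀ * Z + lam • 1)
      - (Xtᵀ * Xt + Yhᵀ * Yh + Zhᵀ * Zh + lam • 1)).PosSemidef := by
  have hX : (Xᵀ * X).PosSemidef := by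
    simpa using posSemidef_conjTranspose_mul_self X
  have hZ : (Zᵀ * Z).PosSemidef := by
    simpa using posSemidef_conjTranspose_mul_self Z
  have h2e : (0:ℝ) ≤ 2 * ε := by linarith
  constructor
  · have key := (((h2l.add h3l).add h1r).add
      ((psd_smul_aux hX h2e).add (psd_smul_aux hZ h2e)))
    convert key using 1
    module
  · have key := (((h2r.add h3r).add h1l).add
      ((psd_smul_aux hX h2e).add (psd_smul_aux hZ h2e)))
    convert key using 1
    module
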